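/- In Q_n, for any A ⊆ {1,...,n} and distinct i,j ∉ A, the identity (r(A∪{i}∪{j}) - r(A∪{i}))·(r(A∪{i}) - r(A∪{j})) = (r(A∪{i}) - r(A∪{j}))·(r(A∪{j}) - r(A)) holds. -/

import Mathlib

namespace QnPaper

/-- The defining relations of the quadratic algebra `Q_n`:
for `A ⊆ {1,…,n}` and distinct `i, j ∉ A`,
`z_{A∪{i},j} + z_{A,i} = z_{A∪{j},i} + z_{A,j}` and
`z_{A∪{i},j} * z_{A,i} = z_{A∪{j},i} * z_{A,j}`. -/
inductive QRel (k : Type) [Field k] (n : ℕ) :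
    FreeAlgebra k (Finset (Fin n) × Fin n) → FreeAlgebra k (Finset (Fin n) × Fin n) → Prop
  | add_rel (A : Finset (Fin n)) (i j : Fin n) (hi : i ∉ A) (hj : j ∉ A) (hij : i ≠ j) :
      QRel k n (FreeAlgebra.ι k (insert i A, j) + FreeAlgebra.ι k (A, i))
        (FreeAlgebra.ι k (insert j A, i) + FreeAlgebra.ι k (A, j))
  | mul_rel (A : Finset (Fin n)) (i j : Fin n) (hi : i ∉ A) (hj : j ∉ A) (hij : i ≠ j) :
      QRel k n (FreeAlgebra.ι k (insert i A, j) * FreeAlgebra.ι k (A, i))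
        (FreeAlgebra.ι k (insert j A, i) * FreeAlgebra.ι k (A, j))

/-- The quadratic algebra `Q_n`. -/
abbrev Q (k : Type) [Field k] (n : ℕ) := RingQuot (QRel k n)

/-- The generator `z_{A,i}` of `Q_n` (only meaningful when `i ∉ A`). -/
def z (k : Type) [Field k] (n : ℕ) (A : Finset (Fin n)) (i : Fin n) : Q k n :=
  RingQuot.mkAlgHom k (QRel k n) (FreeAlgebra.ι k (A, i))

/-- `rAux s [i₁,…,i_r] = z_{s,i₁} + z_{s∪{i₁},i₂} + ⋯`. -/
def rAux (k : Type) [Field k] (n : ℕ) (s : Finset (Fin n)) : List (Fin n) → Q k n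
  | [] => 0
  | a :: l => z k n s a + rAux k n (insert a s) l

/-- `r(A) = z_{A,∅}`, computed using the increasing ordering of `A`. -/
def rFin (k : Type) [Field k] (n : ℕ) (A : Finset (Fin n)) : Q k n :=
  rAux k n ∅ (A.sort (· ≤ ·))

/-- `u(B) = z_{∅,B} = ∑_{D ⊆ B} (-1)^{|B|-|D|} r(D)`. -/
def uFin (k : Type) [Field k] (n : ℕ) (B : Finset (Fin n)) : Q k n :=
  ∑ D ∈ B.powerset, (-1 : Q k n) ^ (B.card - D.card) * rFin k n D
lemma z_add (k : Type) [Field k] (n : ℕ) (A : Finset (Fin n)) (i j : Fin n)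
    (hi : i ∉ A) (hj : j ∉ A) (hij : i ≠ j) :
    z k n (insert i A) j + z k n A i = z k n (insert j A) i + z k n A j := by
  have := RingQuot.mkAlgHom_rel k (QRel.add_rel (k := k) (n := n) A i j hi hj hij)
  simpa [z, map_add] using this

lemma z_mul (k : Type) [Field k] (n : ℕ) (A : Finset (Fin n)) (i j : Fin n)
    (hi : i ∉ A) (hj : j ∉ A) (hij : i ≠ j) :
    z k n (insert i A) j * z k n A i = z k n (insert j A) i * z k n A j := by
  have := RingQuot.mkAlgHom_rel k (QRel.mul_rel (k := k) (n := n) A i j hi hj hij)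
  simpa [z, map_mul] using this

lemma rAux_perm (k : Type) [Field k] (n : ℕ) {l l' : List (Fin n)} (h : l.Perm l') :
    ∀ (s : Finset (Fin n)), l.Nodup → (∀ x ∈ l, x ∉ s) → rAux k n s l = rAux k n s l' := by
  induction h with
  | nil => intro s _ _; rfl
  | cons x h ih =>
    intro s hnd hdisj
    simp only [rAux]
    rw [ih (insert x s) hnd.of_cons]
    intro y hy
    simp only [Finset.mem_insert, not_or]
    exact ⟨fun e => (List.nodup_cons.mp hnd).1 (e ▸ hy), hdisj y (List.mem_cons_of_mem _ hy)⟩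
  | swap x y l =>
    intro s hnd hdisj
    have hxy : y ≠ x := (List.nodup_cons.mp hnd).1 ∘ (fun e => e ▸ List.mem_cons_self)
    have hxs : x ∉ s := hdisj x (by simp)
    have hys : y ∉ s := hdisj y (by simp)
    simp only [rAux, Finset.insert_comm, ← add_assoc]
    rw [add_comm (z k n s y) (z k n (insert y s) x), z_add k n s y x hys hxs hxy,
      add_comm (z k n (insert x s) y) (z k n s x)]
  | trans h12 h23 ih1 ih2 =>
    intro s hnd hdisj
    rw [ih1 s hnd hdisj, ih2 s (h12.nodup hnd) (fun x hx => hdisj x (h12.mem_iff.mpr hx))]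

lemma rAux_append (k : Type) [Field k] (n : ℕ) (x : Fin n) :
    ∀ (l : List (Fin n)) (s : Finset (Fin n)),
      rAux k n s (l ++ [x]) = rAux k n s l + z k n (s ∪ l.toFinset) x := by
  intro l
  induction l with
  | nil => intro s; simp [rAux]
  | cons a l ih =>
    intro s
    have hset : insert a s ∪ l.toFinset = s ∪ (insert a l.toFinset) := by
      ext y
      simp only [Finset.mem_insert, Finset.mem_union]
      tauto
    simp only [List.cons_append, rAux, List.toFinset_cons, List.append_eq]
    rw [ih (insert a s), hset, add_assoc]

lemma rFin_insert (k : Type) [Field k] (n : ℕ) (A : Finset (Fin n)) (i : Fin n) (hi : i ∉ A) :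
    rFin k n (insert i A) = rFin k n A + z k n A i := by
  have hperm : ((insert i A).sort (· ≤ ·)).Perm (A.sort (· ≤ ·) ++ [i]) := by
    refine ((Finset.sort_perm_toList (s := insert i A) (r := (· ≤ ·))).trans ?_)
    refine (Finset.toList_insert hi).trans ?_
    refine ((Finset.sort_perm_toList (s := A) (r := (· ≤ ·))).symm.cons i).trans ?_
    exact (List.perm_append_singleton i _).symm
  have := rAux_perm k n hperm ∅ (Finset.sort_nodup (s := insert i A) (r := (· ≤ ·))) (by simp)
  rw [rFin, this, rAux_append]
  simp [rFin]

/-- `(r(A∪{i}∪{j}) - r(A∪{i}))·(r(A∪{i}) - r(A∪{j})) = (r(A∪{i}) - r(A∪{j}))·(r(A∪{j}) - r(A))`. -/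
theorem stmt9 (k : Type) [Field k] (n : ℕ) (A : Finset (Fin n)) (i j : Fin n)
    (hi : i ∉ A) (hj : j ∉ A) (hij : i ≠ j) :
    (rFin k n (insert j (insert i A)) - rFin k n (insert i A)) *
        (rFin k n (insert i A) - rFin k n (insert j A))
      = (rFin k n (insert i A) - rFin k n (insert j A)) *
        (rFin k n (insert j A) - rFin k n A) := by
  have hji : j ∉ insert i A := by simp [hij.symm, hj]
  rw [rFin_insert k n (insert i A) j hji, rFin_insert k n A i hi, rFin_insert k n A j hj]
  have e1 : rFin k n A + z k n A i + z k n (insert i A) j - (rFin k n A + z k n A i)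
      = z k n (insert i A) j := by abel
  have e2 : rFin k n A + z k n A i - (rFin k n A + z k n A j) = z k n A i - z k n A j := by abel
  have e3 : rFin k n A + z k n A j - rFin k n A = z k n A j := by abel
  rw [e1, e2, e3]
  have h1 := z_add k n A i j hi hj hij
  have h2 := z_mul k n A i j hi hj hij
  have hd : z k n (insert j A) i
      = z k n (insert i A) j + z k n A i - z k n A j := eq_sub_of_add_eq h1.symm
  rw [hd] at h2
  calc z k n (insert i A) j * (z k n A i - z k n A j)
      = z k n (insert i A) j * z k n A i - z k n (insert i A) j * z k n A j := by
        rw [mul_sub]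
    _ = (z k n (insert i A) j + z k n A i - z k n A j) * z k n A j
          - z k n (insert i A) j * z k n A j := by rw [h2]
    _ = (z k n A i - z k n A j) * z k n A j := by
        rw [sub_mul, add_mul, sub_mul]; abel
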